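/- arXiv:1007.1193 — 2 statements merged into one kernel-verified Lean document; each statement's English description precedes it below -/
import Mathlib

section
/- Let Σ : (0,1] → ℝ^{d×d} take positive definite values and 1_{p×p} denote the p×p matrix of ones, and let ψ̃_i be block-diagonal matrices with absolutely summable components such that Λ1 = ∫₀¹ Σ_{i=0}^∞ {ψ̃_i (1_{p×p} ⊗ Σ(r)) ψ̃_i'} ⊗ Σ(r)^{−1} dr, Λ2 = ∫₀¹ Σ_{i=0}^∞ {ψ̃_i (1_{p×p} ⊗ Σ(r)) ψ̃_i'} ⊗ Σ(r) dr and Λ3 = ∫₀¹ Σ_{i=0}^∞ {ψ̃_i (1_{p×p} ⊗ Σ(r)) ψ̃_i'} dr ⊗ I_d are well defined and Λ1, Λ2 are positive definite. Writing Σ_{i=0}^∞ ψ̃_i (1_{p×p} ⊗ Σ(r)) ψ̃_i' = Z(r)Z(r)' (Cholesky) and B_k(r) = (Z(r) ⊗ Σ(r)^{k−3/2})' for k = 1,2, one has Λ_k = ∫₀¹ B_k(r)' B_k(r) dr and Λ3 = ∫₀¹ B_2(r)' B_1(r) dr, and the matrix Λ3^{−1} Λ2 Λ3^{−1} − Λ1^{−1}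 is positive semidefinite; equivalently, Λ1 − Λ3 Λ2^{−1} Λ3 is positive semidefinite. Hence the asymptotic variance of the GLS estimator is smaller than that of the OLS estimator. -/
open MeasureTheory ProbabilityTheory Filter Matrix Kronecker Topology

noncomputable section

/-! ### Generic probabilistic notions -/

/-- Convergence in distribution (weak convergence of the image measures). -/
def TendstoInDistribution {Ω E : Type*} [MeasurableSpace Ω] [MeasurableSpace E]
    [TopologicalSpace E] (S : ℕ → Ω → E) (μ : Measure Ω) (ν : Measure E) : Prop :=
  ∀ f : BoundedContinuousFunction E ℝ,
    Tendsto (fun T => ∫ ω, f (S T ω) ∂μ) atTop (𝓝 (∫ x, f x ∂ν))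

/-- A measure on `n → ℝ` is the centered Gaussian law with covariance matrix `S` if every
linear functional pushes it forward to a one–dimensional centered Gaussian with the
corresponding variance. -/
def IsCenteredGaussian {n : Type*} [Fintype n] (ν : Measure (n → ℝ)) (S : Matrix n n ℝ) : Prop :=
  IsProbabilityMeasure ν ∧
    ∀ a : n → ℝ, ν.map (fun x => ∑ i, a i * x i) =
      gaussianReal 0 (Real.toNNReal (a ⬝ᵥ S.mulVec a))

/-- The chi-square distribution with `n` degrees of freedom, realized as the law of the sum of
squares of `n` independent standard normal random variables. -/
def chiSquare (n : ℕ) : Measure ℝ :=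
  (Measure.pi fun _ : Fin n => gaussianReal 0 1).map fun x => ∑ i, (x i) ^ 2

/-- The law of `∑ i κ i * Z i ^ 2` for independent standard normal `Z i`. -/
def weightedChiSquare {n : Type*} [Fintype n] (κ : n → ℝ) : Measure ℝ :=
  (Measure.pi fun _ : n => gaussianReal 0 1).map fun x => ∑ i, κ i * (x i) ^ 2

/-- The strong (α-)mixing coefficient between two sub-σ-fields. -/
def mixCoef {Ω : Type*} [MeasurableSpace Ω] (μ : Measure Ω) (m₁ m₂ : MeasurableSpace Ω) : ℝ :=
  sSup {x | ∃ A B : Set Ω, MeasurableSet[m₁] A ∧ MeasurableSet[m₂] B ∧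
    x = |(μ (A ∩ B)).toReal - (μ A).toReal * (μ B).toReal|}

/-- σ-field generated by the past of a process up to time `t`. -/
def pastSigma {Ω : Type*} {d : ℕ} (ε : ℤ → Ω → Fin d → ℝ) (t : ℤ) : MeasurableSpace Ω :=
  ⨆ s : {s : ℤ // s ≤ t}, MeasurableSpace.comap (ε s.1) inferInstance

/-- σ-field generated by the future of a process from time `t` on. -/
def futureSigma {Ω : Type*} {d : ℕ} (ε : ℤ → Ω → Fin d → ℝ) (t : ℤ) : MeasurableSpace Ω :=
  ⨆ s : {s : ℤ // t ≤ s}, MeasurableSpace.comap (ε s.1) inferInstance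

/-- The process `ε` is strongly (α-)mixing: the mixing coefficients tend to zero. -/
def IsAlphaMixing {Ω : Type*} [MeasurableSpace Ω] {d : ℕ} (μ : Measure Ω)
    (ε : ℤ → Ω → Fin d → ℝ) : Prop :=
  Tendsto (fun n : ℕ => ⨆ t : ℤ, mixCoef μ (pastSigma ε t) (futureSigma ε (t + n)))
    atTop (𝓝 0)

/-- A function on `(0,1]` satisfying a Lipschitz condition piecewise on a finite number of
subintervals partitioning `(0,1]`. -/
def PiecewiseLipschitzOn01 (f : ℝ → ℝ) : Prop :=
  ∃ (n : ℕ) (a : ℕ → ℝ), 0 < n ∧ a 0 = 0 ∧ a n = 1 ∧ (∀ i < n, a i < a (i + 1)) ∧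
    ∀ i < n, ∃ L : NNReal, LipschitzOnWith L f (Set.Ioc (a i) (a (i + 1)))

/-- Frobenius norm of a real matrix. -/
def frobNorm {d : ℕ} (M : Matrix (Fin d) (Fin d) ℝ) : ℝ :=
  Real.sqrt (∑ k, ∑ l, (M k l) ^ 2)

/-! ### The heteroscedastic VAR model -/

/-- Time-varying variance function `Σ(r) = G(r)G(r)'`. -/
def Sig {d : ℕ} (G : ℝ → Matrix (Fin d) (Fin d) ℝ) (r : ℝ) : Matrix (Fin d) (Fin d) ℝ :=
  G r * (G r)ᵀ

/-- The innovation `u_t = H_t ε_t` with `H_t = G(t/T)` (triangular array). -/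
def uproc {Ω : Type*} {d : ℕ} (G : ℝ → Matrix (Fin d) (Fin d) ℝ) (ε : ℤ → Ω → Fin d → ℝ)
    (T : ℕ) (t : ℤ) (ω : Ω) : Fin d → ℝ :=
  (G ((t : ℝ) / (T : ℝ))).mulVec (ε t ω)

/-- `Σ_t = H_t H_t'` with `H_t = G(t/T)`. -/
def Sigt {d : ℕ} (G : ℝ → Matrix (Fin d) (Fin d) ℝ) (T : ℕ) (t : ℤ) :
    Matrix (Fin d) (Fin d) ℝ :=
  Sig G ((t : ℝ) / (T : ℝ))

/-- The stacked vector `X̃_t = (X_t', …, X_{t-p+1}')'`. -/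
def Xtilde {Ω : Type*} {d : ℕ} (p : ℕ) (X : ℕ → ℤ → Ω → Fin d → ℝ) (T : ℕ) (t : ℤ)
    (ω : Ω) : Fin p × Fin d → ℝ :=
  fun q => X T (t - (q.1 : ℕ)) ω q.2

/-- The parameter vector `θ₀ = (vec A₁', …, vec A_p')'`. -/
def theta0 {d p : ℕ} (A : Fin p → Matrix (Fin d) (Fin d) ℝ) : (Fin p × Fin d) × Fin d → ℝ :=
  fun q => A q.1.1 q.2 q.1.2

/-- Assumption A1 of the paper. -/
structure AssumptionA1 {Ω : Type*} [MeasurableSpace Ω] (μ : Measure Ω) {d : ℕ}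
    (G : ℝ → Matrix (Fin d) (Fin d) ℝ) (ε : ℤ → Ω → Fin d → ℝ) : Prop where
  G_invertible : ∀ r ∈ Set.Ioc (0 : ℝ) 1, IsUnit (G r).det
  G_meas : ∀ k l, Measurable fun r => G r k l
  G_bdd : ∃ M : ℝ, ∀ r ∈ Set.Ioc (0 : ℝ) 1, ∀ k l, |G r k l| ≤ M
  G_lip : ∀ k l, PiecewiseLipschitzOn01 fun r => G r k l
  G_ext : ∀ r : ℝ, r ≤ 0 → G r = 1
  Sig_posdef : ∀ r ∈ Set.Ioc (0 : ℝ) 1, (Sig G r).PosDef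
  eps_meas : ∀ t, Measurable (ε t)
  mixing : IsAlphaMixing μ ε
  mds : ∀ (t : ℤ) (k : Fin d), μ[fun ω => ε t ω k|pastSigma ε (t - 1)] =ᵐ[μ] 0
  cond_var : ∀ (t : ℤ) (k l : Fin d),
    μ[fun ω => ε t ω k * ε t ω l|pastSigma ε (t - 1)] =ᵐ[μ]
      fun _ => if k = l then 1 else 0
  moments : ∃ m : ℝ, 1 < m ∧ ∃ C : ℝ, ∀ (t : ℤ) (k : Fin d),
    ∫ ω, |ε t ω k| ^ (4 * m) ∂μ ≤ C

/-- Assumption A1' of the paper (A1(i) plus uniformly bounded-below eigenvalues and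
8th order moments). -/
structure AssumptionA1' {Ω : Type*} [MeasurableSpace Ω] (μ : Measure Ω) {d : ℕ}
    (G : ℝ → Matrix (Fin d) (Fin d) ℝ) (ε : ℤ → Ω → Fin d → ℝ) : Prop where
  G_invertible : ∀ r ∈ Set.Ioc (0 : ℝ) 1, IsUnit (G r).det
  G_meas : ∀ k l, Measurable fun r => G r k l
  G_bdd : ∃ M : ℝ, ∀ r ∈ Set.Ioc (0 : ℝ) 1, ∀ k l, |G r k l| ≤ M
  G_lip : ∀ k l, PiecewiseLipschitzOn01 fun r => G r k l
  G_ext : ∀ r : ℝ, r ≤ 0 → G r = 1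
  Sig_posdef : ∀ r ∈ Set.Ioc (0 : ℝ) 1, (Sig G r).PosDef
  eig_lb : ∃ c : ℝ, 0 < c ∧ ∀ r ∈ Set.Ioc (0 : ℝ) 1, ∀ x : Fin d → ℝ,
    c * (∑ k, x k ^ 2) ≤ x ⬝ᵥ (Sig G r).mulVec x
  eps_meas : ∀ t, Measurable (ε t)
  mixing : IsAlphaMixing μ ε
  mds : ∀ (t : ℤ) (k : Fin d), μ[fun ω => ε t ω k|pastSigma ε (t - 1)] =ᵐ[μ] 0
  cond_var : ∀ (t : ℤ) (k l : Fin d),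
    μ[fun ω => ε t ω k * ε t ω l|pastSigma ε (t - 1)] =ᵐ[μ]
      fun _ => if k = l then 1 else 0
  moments8 : ∃ C : ℝ, ∀ (t : ℤ) (k : Fin d), ∫ ω, |ε t ω k| ^ (8 : ℕ) ∂μ ≤ C

/-- The VAR(p) equations `X_t = A₁X_{t-1} + … + A_p X_{t-p} + u_t` for the triangular array. -/
def IsVAR {Ω : Type*} {d p : ℕ} (X : ℕ → ℤ → Ω → Fin d → ℝ)
    (A : Fin p → Matrix (Fin d) (Fin d) ℝ) (G : ℝ → Matrix (Fin d) (Fin d) ℝ)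
    (ε : ℤ → Ω → Fin d → ℝ) : Prop :=
  ∀ (T : ℕ) (t : ℤ) (ω : Ω) (k : Fin d),
    X T t ω k = (∑ i : Fin p, (A i).mulVec (X T (t - 1 - (i : ℕ)) ω) k) + uproc G ε T t ω k

/-- Stability: `det A(z) ≠ 0` for all `|z| ≤ 1`. -/
def IsStable {d p : ℕ} (A : Fin p → Matrix (Fin d) (Fin d) ℝ) : Prop :=
  ∀ z : ℂ, ‖z‖ ≤ 1 →
    ((1 : Matrix (Fin d) (Fin d) ℂ) -
      ∑ i : Fin p, z ^ ((i : ℕ) + 1) • (A i).map (fun x => (x : ℂ))).det ≠ 0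

/-- The MA(∞) representation `X_t = ∑_{i≥0} ψ_i u_{t-i}`. -/
def HasMARep {Ω : Type*} {d p : ℕ} (X : ℕ → ℤ → Ω → Fin d → ℝ)
    (ψ : ℕ → Matrix (Fin d) (Fin d) ℝ) (G : ℝ → Matrix (Fin d) (Fin d) ℝ)
    (ε : ℤ → Ω → Fin d → ℝ) (_hp : 0 < p) : Prop :=
  ∀ (T : ℕ) (t : ℤ) (ω : Ω) (k : Fin d),
    X T t ω k = ∑' i : ℕ, (ψ i).mulVec (uproc G ε T (t - (i : ℕ)) ω) k

/-- The recursion defining the MA coefficients `ψ` from the autoregressive matrices. -/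
def IsMACoeff {d p : ℕ} (ψ : ℕ → Matrix (Fin d) (Fin d) ℝ)
    (A : Fin p → Matrix (Fin d) (Fin d) ℝ) : Prop :=
  ψ 0 = 1 ∧ ∀ n : ℕ, ψ (n + 1) =
    ∑ i : Fin p, if (i : ℕ) ≤ n then A i * ψ (n - (i : ℕ)) else 0

/-- The block diagonal matrices `ψ̃_i = blockdiag(ψ_i, …, ψ_{i-p+1})` (with `ψ_j = 0`, `j<0`). -/
def psiT {d : ℕ} (p : ℕ) (ψ : ℕ → Matrix (Fin d) (Fin d) ℝ) (i : ℕ) :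
    Matrix (Fin p × Fin d) (Fin p × Fin d) ℝ :=
  Matrix.of fun q q' =>
    if q.1 = q'.1 ∧ (q.1 : ℕ) ≤ i then ψ (i - (q.1 : ℕ)) q.2 q'.2 else 0

/-- `∑_{i≥0} ψ̃_i (1_{p×p} ⊗ S) ψ̃_i'` computed entrywise. -/
def SSmat {d : ℕ} (p : ℕ) (ψ : ℕ → Matrix (Fin d) (Fin d) ℝ)
    (S : Matrix (Fin d) (Fin d) ℝ) : Matrix (Fin p × Fin d) (Fin p × Fin d) ℝ :=
  Matrix.of fun q q' => ∑' i : ℕ,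
    (psiT p ψ i * ((Matrix.of fun _ _ => (1 : ℝ) : Matrix (Fin p) (Fin p) ℝ) ⊗ₖ S) *
      (psiT p ψ i)ᵀ) q q'

/-- `Λ₁ = ∫₀¹ {∑ ψ̃_i (1 ⊗ Σ(r)) ψ̃_i'} ⊗ Σ(r)⁻¹ dr`. -/
def Lambda1 {d : ℕ} (p : ℕ) (ψ : ℕ → Matrix (Fin d) (Fin d) ℝ)
    (G : ℝ → Matrix (Fin d) (Fin d) ℝ) :
    Matrix ((Fin p × Fin d) × Fin d) ((Fin p × Fin d) × Fin d) ℝ :=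
  Matrix.of fun q q' =>
    ∫ r in Set.Ioc (0 : ℝ) 1, SSmat p ψ (Sig G r) q.1 q'.1 * (Sig G r)⁻¹ q.2 q'.2

/-- `Λ₂ = ∫₀¹ {∑ ψ̃_i (1 ⊗ Σ(r)) ψ̃_i'} ⊗ Σ(r) dr`. -/
def Lambda2 {d : ℕ} (p : ℕ) (ψ : ℕ → Matrix (Fin d) (Fin d) ℝ)
    (G : ℝ → Matrix (Fin d) (Fin d) ℝ) :
    Matrix ((Fin p × Fin d) × Fin d) ((Fin p × Fin d) × Fin d) ℝ :=
  Matrix.of fun q q' =>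
    ∫ r in Set.Ioc (0 : ℝ) 1, SSmat p ψ (Sig G r) q.1 q'.1 * Sig G r q.2 q'.2

/-- `Λ₃ = (∫₀¹ ∑ ψ̃_i (1 ⊗ Σ(r)) ψ̃_i' dr) ⊗ I_d`. -/
def Lambda3 {d : ℕ} (p : ℕ) (ψ : ℕ → Matrix (Fin d) (Fin d) ℝ)
    (G : ℝ → Matrix (Fin d) (Fin d) ℝ) :
    Matrix ((Fin p × Fin d) × Fin d) ((Fin p × Fin d) × Fin d) ℝ :=
  Matrix.of fun q q' =>
    (∫ r in Set.Ioc (0 : ℝ) 1, SSmat p ψ (Sig G r) q.1 q'.1) *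
      (if q.2 = q'.2 then (1 : ℝ) else 0)

/-- `Ω₁ = ∫₀¹ Σ(r) ⊗ Σ(r)⁻¹ dr`. -/
def Omega1 {d : ℕ} (G : ℝ → Matrix (Fin d) (Fin d) ℝ) :
    Matrix (Fin d × Fin d) (Fin d × Fin d) ℝ :=
  Matrix.of fun a b => ∫ r in Set.Ioc (0 : ℝ) 1, Sig G r a.1 b.1 * (Sig G r)⁻¹ a.2 b.2

/-- `Ω₂ = ∫₀¹ Σ(r) ⊗ Σ(r) dr`. -/
def Omega2 {d : ℕ} (G : ℝ → Matrix (Fin d) (Fin d) ℝ) :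
    Matrix (Fin d × Fin d) (Fin d × Fin d) ℝ :=
  Matrix.of fun a b => ∫ r in Set.Ioc (0 : ℝ) 1, Sig G r a.1 b.1 * Sig G r a.2 b.2

/-- `Ω₃ = ∫₀¹ Σ(r) dr`. -/
def Omega3 {d : ℕ} (G : ℝ → Matrix (Fin d) (Fin d) ℝ) : Matrix (Fin d) (Fin d) ℝ :=
  Matrix.of fun k l => ∫ r in Set.Ioc (0 : ℝ) 1, Sig G r k l

/-- `J = (∫₀¹ ∑ ψ̃_i (1 ⊗ Σ(r)) ψ̃_i' dr) ⊗ Ω₃⁻¹`. -/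
def Jmat {d : ℕ} (p : ℕ) (ψ : ℕ → Matrix (Fin d) (Fin d) ℝ)
    (G : ℝ → Matrix (Fin d) (Fin d) ℝ) :
    Matrix ((Fin p × Fin d) × Fin d) ((Fin p × Fin d) × Fin d) ℝ :=
  Matrix.of fun q q' =>
    (∫ r in Set.Ioc (0 : ℝ) 1, SSmat p ψ (Sig G r) q.1 q'.1) * (Omega3 G)⁻¹ q.2 q'.2

/-! ### Least squares estimators -/

/-- `Σ̂_X̃ = T⁻¹ ∑ X̃_{t-1}X̃_{t-1}' ⊗ I_d` (OLS design matrix); also `Λ̂₃`. -/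
def SigHatOLS {Ω : Type*} {d : ℕ} (p : ℕ) (X : ℕ → ℤ → Ω → Fin d → ℝ) (T : ℕ) (ω : Ω) :
    Matrix ((Fin p × Fin d) × Fin d) ((Fin p × Fin d) × Fin d) ℝ :=
  (T : ℝ)⁻¹ • ∑ t ∈ Finset.range T,
    vecMulVec (Xtilde p X T (t : ℤ) ω) (Xtilde p X T (t : ℤ) ω) ⊗ₖ
      (1 : Matrix (Fin d) (Fin d) ℝ)

/-- The OLS estimator `θ̂_OLS`. -/
def thetaOLS {Ω : Type*} {d : ℕ} (p : ℕ) (X : ℕ → ℤ → Ω → Fin d → ℝ) (T : ℕ) (ω : Ω) :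
    (Fin p × Fin d) × Fin d → ℝ :=
  (SigHatOLS p X T ω)⁻¹.mulVec fun q =>
    (T : ℝ)⁻¹ * ∑ t ∈ Finset.range T, X T ((t : ℤ) + 1) ω q.2 * Xtilde p X T (t : ℤ) ω q.1

/-- `Σ̂_X̲̃ = T⁻¹ ∑ X̃_{t-1}X̃_{t-1}' ⊗ Σ_t⁻¹` (GLS design matrix). -/
def SigHatGLS {Ω : Type*} {d : ℕ} (p : ℕ) (X : ℕ → ℤ → Ω → Fin d → ℝ)
    (G : ℝ → Matrix (Fin d) (Fin d) ℝ) (T : ℕ) (ω : Ω) :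
    Matrix ((Fin p × Fin d) × Fin d) ((Fin p × Fin d) × Fin d) ℝ :=
  (T : ℝ)⁻¹ • ∑ t ∈ Finset.range T,
    vecMulVec (Xtilde p X T (t : ℤ) ω) (Xtilde p X T (t : ℤ) ω) ⊗ₖ
      (Sigt G T ((t : ℤ) + 1))⁻¹

/-- The (infeasible) GLS estimator `θ̂_GLS`. -/
def thetaGLS {Ω : Type*} {d : ℕ} (p : ℕ) (X : ℕ → ℤ → Ω → Fin d → ℝ)
    (G : ℝ → Matrix (Fin d) (Fin d) ℝ) (T : ℕ) (ω : Ω) :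
    (Fin p × Fin d) × Fin d → ℝ :=
  (SigHatGLS p X G T ω)⁻¹.mulVec fun q =>
    (T : ℝ)⁻¹ * ∑ t ∈ Finset.range T,
      (Sigt G T ((t : ℤ) + 1))⁻¹.mulVec (X T ((t : ℤ) + 1) ω) q.2 *
        Xtilde p X T (t : ℤ) ω q.1

/-- The OLS residuals `û_t`. -/
def resOLS {Ω : Type*} {d : ℕ} (p : ℕ) (X : ℕ → ℤ → Ω → Fin d → ℝ) (T : ℕ) (t : ℤ)
    (ω : Ω) : Fin d → ℝ :=
  fun k => X T t ω k -
    ∑ q : Fin p × Fin d, Xtilde p X T (t - 1) ω q * thetaOLS p X T ω (q, k)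

/-- `Ω̂₂ = T⁻¹ ∑_{t=2}^T û_{t-1}û_{t-1}' ⊗ û_t û_t'`. -/
def Omega2hat {Ω : Type*} {d : ℕ} (p : ℕ) (X : ℕ → ℤ → Ω → Fin d → ℝ) (T : ℕ) (ω : Ω) :
    Matrix (Fin d × Fin d) (Fin d × Fin d) ℝ :=
  Matrix.of fun a b => (T : ℝ)⁻¹ * ∑ t ∈ Finset.Icc 2 T,
    resOLS p X T ((t : ℤ) - 1) ω a.1 * resOLS p X T ((t : ℤ) - 1) ω b.1 *
      (resOLS p X T (t : ℤ) ω a.2 * resOLS p X T (t : ℤ) ω b.2)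

/-- `Ω̂₃ = T⁻¹ ∑_{t=1}^T û_t û_t'`. -/
def Omega3hat {Ω : Type*} {d : ℕ} (p : ℕ) (X : ℕ → ℤ → Ω → Fin d → ℝ) (T : ℕ) (ω : Ω) :
    Matrix (Fin d) (Fin d) ℝ :=
  Matrix.of fun k l => (T : ℝ)⁻¹ * ∑ t ∈ Finset.Icc 1 T,
    resOLS p X T (t : ℤ) ω k * resOLS p X T (t : ℤ) ω l

/-- `Λ̂₂ = T⁻¹ ∑ X̃_{t-1}X̃_{t-1}' ⊗ û_t û_t'`. -/
def Lambda2hat {Ω : Type*} {d : ℕ} (p : ℕ) (X : ℕ → ℤ → Ω → Fin d → ℝ) (T : ℕ) (ω : Ω) :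
    Matrix ((Fin p × Fin d) × Fin d) ((Fin p × Fin d) × Fin d) ℝ :=
  Matrix.of fun q q' => (T : ℝ)⁻¹ * ∑ t ∈ Finset.range T,
    Xtilde p X T (t : ℤ) ω q.1 * Xtilde p X T (t : ℤ) ω q'.1 *
      (resOLS p X T ((t : ℤ) + 1) ω q.2 * resOLS p X T ((t : ℤ) + 1) ω q'.2)

/-! ### Companion matrix and the vec identities -/

/-- The companion matrix `Δ` of the VAR polynomial. -/
def companion {d p : ℕ} (A : Fin p → Matrix (Fin d) (Fin d) ℝ) :
    Matrix (Fin p × Fin d) (Fin p × Fin d) ℝ :=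
  Matrix.of fun q q' =>
    if (q.1 : ℕ) = 0 then A q'.1 q.2 q'.2
    else if (q.1 : ℕ) = (q'.1 : ℕ) + 1 then (if q.2 = q'.2 then (1 : ℝ) else 0) else 0

/-- `(Δ ⊗ I_d) ⊗ (Δ ⊗ I_d)`. -/
def kron2 {d p : ℕ} (Δ : Matrix (Fin p × Fin d) (Fin p × Fin d) ℝ) :
    Matrix (((Fin p × Fin d) × Fin d) × ((Fin p × Fin d) × Fin d))
      (((Fin p × Fin d) × Fin d) × ((Fin p × Fin d) × Fin d)) ℝ :=
  (Δ ⊗ₖ (1 : Matrix (Fin d) (Fin d) ℝ)) ⊗ₖ (Δ ⊗ₖ (1 : Matrix (Fin d) (Fin d) ℝ))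

/-- `vec` of a matrix (stacking the columns). -/
def vecM {a b : Type*} (M : Matrix a b ℝ) : b × a → ℝ := fun q => M q.2 q.1

/-- Inverse of `vecM`. -/
def unvecM {a b : Type*} (v : b × a → ℝ) : Matrix a b ℝ := Matrix.of fun i j => v (j, i)

/-- The `pd² × pd²` matrix with upper-left `d² × d²` block `M` and zeros elsewhere. -/
def blockTop {d : ℕ} (p : ℕ) (M : Matrix (Fin d × Fin d) (Fin d × Fin d) ℝ) :
    Matrix ((Fin p × Fin d) × Fin d) ((Fin p × Fin d) × Fin d) ℝ :=
  Matrix.of fun q q' =>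
    if (q.1.1 : ℕ) = 0 ∧ (q'.1.1 : ℕ) = 0 then M (q.1.2, q.2) (q'.1.2, q'.2) else 0

/-- The AR matrices recovered from a parameter vector `θ`. -/
def ARof {d p : ℕ} (θ : (Fin p × Fin d) × Fin d → ℝ) :
    Fin p → Matrix (Fin d) (Fin d) ℝ :=
  fun i => Matrix.of fun k j => θ ((i, j), k)

/-- Alternative estimator `Λ̂_{2δ}` based on the vec identity and the OLS companion matrix. -/
def Lambda2deltaHat {Ω : Type*} {d : ℕ} (p : ℕ) (X : ℕ → ℤ → Ω → Fin d → ℝ) (T : ℕ)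
    (ω : Ω) : Matrix ((Fin p × Fin d) × Fin d) ((Fin p × Fin d) × Fin d) ℝ :=
  unvecM ((1 - kron2 (companion (ARof (thetaOLS p X T ω))))⁻¹.mulVec
    (vecM (blockTop p (Omega2hat p X T ω))))

/-- Alternative estimator `Λ̂_{3δ}`. -/
def Lambda3deltaHat {Ω : Type*} {d : ℕ} (p : ℕ) (X : ℕ → ℤ → Ω → Fin d → ℝ) (T : ℕ)
    (ω : Ω) : Matrix ((Fin p × Fin d) × Fin d) ((Fin p × Fin d) × Fin d) ℝ :=
  unvecM ((1 - kron2 (companion (ARof (thetaOLS p X T ω))))⁻¹.mulVec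
    (vecM (blockTop p (Omega3hat p X T ω ⊗ₖ (1 : Matrix (Fin d) (Fin d) ℝ)))))

/-! ### Kernel smoothing and the adaptive estimator -/

/-- `K_{ti}(b)`. -/
def Kti (K : ℝ → ℝ) (T : ℕ) (b : ℝ) (t i : ℕ) : ℝ :=
  if t = i then 0 else K (((t : ℝ) - (i : ℝ)) / ((T : ℝ) * b))

/-- The kernel weights `w_{ti}(b)`. -/
def wti (K : ℝ → ℝ) (T : ℕ) (b : ℝ) (t i : ℕ) : ℝ :=
  Kti K T b t i / ∑ j ∈ Finset.Icc 1 T, Kti K T b t j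

/-- Admissible bandwidth matrices: all entries in `B_T = [c_min b_T, c_max b_T]`, symmetric. -/
def Adm {d : ℕ} (bT : ℕ → ℝ) (cmin cmax : ℝ) (T : ℕ) (b : Fin d × Fin d → ℝ) : Prop :=
  (∀ kl, b kl ∈ Set.Icc (cmin * bT T) (cmax * bT T)) ∧ ∀ k l, b (k, l) = b (l, k)

/-- Assumption A2(i) on the kernel. -/
structure A2Kernel (K : ℝ → ℝ) : Prop where
  nonneg : ∀ v, 0 ≤ K v
  bdd : ∃ M : ℝ, ∀ v, K v ≤ M
  integrable : Integrable K
  density : ∫ v, K v = 1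
  mono : MonotoneOn K (Set.Iic 0)
  anti : AntitoneOn K (Set.Ici 0)
  second_moment : Integrable fun v => v ^ 2 * K v
  deriv : ∃ (s : Finset ℝ) (K' : ℝ → ℝ), (∀ v ∉ s, HasDerivAt K (K' v) v) ∧ Integrable K'
  fourier : Integrable fun s : ℝ =>
    |s| * ‖FourierTransform.fourier (fun v => (K v : ℂ)) s‖

/-- Assumption A2(ii) on the bandwidth range. -/
structure A2Bandwidth (bT : ℕ → ℝ) (cmin cmax : ℝ) : Prop where
  pos : ∀ T, 0 < bT T
  cmin_pos : 0 < cmin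
  cmin_lt_cmax : cmin < cmax
  to_zero : Tendsto bT atTop (𝓝 0)
  rate : ∃ γ : ℝ, 0 < γ ∧ Tendsto (fun T : ℕ => (T : ℝ) * bT T ^ ((2 : ℝ) + γ)) atTop atTop

/-- The raw kernel estimator `Σ̌_t⁰ = ∑_i w_{ti} ⊙ û_i û_i'`. -/
def SigCheck0 {Ω : Type*} {d : ℕ} (p : ℕ) (X : ℕ → ℤ → Ω → Fin d → ℝ) (K : ℝ → ℝ)
    (b : Fin d × Fin d → ℝ) (T t : ℕ) (ω : Ω) : Matrix (Fin d) (Fin d) ℝ :=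
  Matrix.of fun k l => ∑ i ∈ Finset.Icc 1 T,
    wti K T (b (k, l)) t i * (resOLS p X T (i : ℤ) ω k * resOLS p X T (i : ℤ) ω l)

/-- Regularized square root `{M² + ν I}^{1/2}` (for symmetric `M`, `M² = MᵀM`). -/
def matSqrtReg {d : ℕ} (M : Matrix (Fin d) (Fin d) ℝ) (ν : ℝ) : Matrix (Fin d) (Fin d) ℝ :=
  letI := Classical.dec ((Mᵀ * M + ν • (1 : Matrix (Fin d) (Fin d) ℝ)).PosSemidef)
  if h : (Mᵀ * M + ν • (1 : Matrix (Fin d) (Fin d) ℝ)).PosSemidef then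
    (h.1.eigenvectorUnitary : Matrix (Fin d) (Fin d) ℝ) *
      diagonal (fun i => Real.sqrt (h.1.eigenvalues i)) *
      (star h.1.eigenvectorUnitary : Matrix (Fin d) (Fin d) ℝ) else 1

/-- The regularized kernel estimator `Σ̌_t = {(Σ̌_t⁰)² + ν_T I}^{1/2}`. -/
def SigCheck {Ω : Type*} {d : ℕ} (p : ℕ) (X : ℕ → ℤ → Ω → Fin d → ℝ) (K : ℝ → ℝ)
    (νT : ℕ → ℝ) (b : Fin d × Fin d → ℝ) (T t : ℕ) (ω : Ω) : Matrix (Fin d) (Fin d) ℝ :=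
  matSqrtReg (SigCheck0 p X K b T t ω) (νT T)

/-- The adaptive least squares estimator `θ̂_ALS`. -/
def thetaALS {Ω : Type*} {d : ℕ} (p : ℕ) (X : ℕ → ℤ → Ω → Fin d → ℝ) (K : ℝ → ℝ)
    (νT : ℕ → ℝ) (b : Fin d × Fin d → ℝ) (T : ℕ) (ω : Ω) :
    (Fin p × Fin d) × Fin d → ℝ :=
  ((T : ℝ)⁻¹ • ∑ t ∈ Finset.range T,
      vecMulVec (Xtilde p X T (t : ℤ) ω) (Xtilde p X T (t : ℤ) ω) ⊗ₖ
        (SigCheck p X K νT b T (t + 1) ω)⁻¹)⁻¹.mulVec fun q =>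
    (T : ℝ)⁻¹ * ∑ t ∈ Finset.range T,
      (SigCheck p X K νT b T (t + 1) ω)⁻¹.mulVec (X T ((t : ℤ) + 1) ω) q.2 *
        Xtilde p X T (t : ℤ) ω q.1

/-- `Λ̌₁ = T⁻¹ ∑ X̃_{t-1}X̃_{t-1}' ⊗ Σ̌_t⁻¹`. -/
def Lambda1check {Ω : Type*} {d : ℕ} (p : ℕ) (X : ℕ → ℤ → Ω → Fin d → ℝ) (K : ℝ → ℝ)
    (νT : ℕ → ℝ) (b : Fin d × Fin d → ℝ) (T : ℕ) (ω : Ω) :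
    Matrix ((Fin p × Fin d) × Fin d) ((Fin p × Fin d) × Fin d) ℝ :=
  (T : ℝ)⁻¹ • ∑ t ∈ Finset.range T,
    vecMulVec (Xtilde p X T (t : ℤ) ω) (Xtilde p X T (t : ℤ) ω) ⊗ₖ
      (SigCheck p X K νT b T (t + 1) ω)⁻¹

/-- `Ω̌₁ = T⁻¹ ∑ Σ̌_t ⊗ Σ̌_t⁻¹`. -/
def Omega1check {Ω : Type*} {d : ℕ} (p : ℕ) (X : ℕ → ℤ → Ω → Fin d → ℝ) (K : ℝ → ℝ)
    (νT : ℕ → ℝ) (b : Fin d × Fin d → ℝ) (T : ℕ) (ω : Ω) :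
    Matrix (Fin d × Fin d) (Fin d × Fin d) ℝ :=
  Matrix.of fun a c => (T : ℝ)⁻¹ * ∑ t ∈ Finset.Icc 1 T,
    SigCheck p X K νT b T t ω a.1 c.1 * (SigCheck p X K νT b T t ω)⁻¹ a.2 c.2

/-- Alternative estimator `Λ̌_{1δ}` based on the vec identity and the ALS companion matrix. -/
def Lambda1deltaCheck {Ω : Type*} {d : ℕ} (p : ℕ) (X : ℕ → ℤ → Ω → Fin d → ℝ) (K : ℝ → ℝ)
    (νT : ℕ → ℝ) (b : Fin d × Fin d → ℝ) (T : ℕ) (ω : Ω) :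
    Matrix ((Fin p × Fin d) × Fin d) ((Fin p × Fin d) × Fin d) ℝ :=
  unvecM ((1 - kron2 (companion (ARof (thetaALS p X K νT b T ω))))⁻¹.mulVec
    (vecM (blockTop p (Omega1check p X K νT b T ω))))

/-- `Σ̊_t = ∑_i w_{ti} ⊙ u_i u_i'` (kernel smoothing of the true errors). -/
def SigRing {Ω : Type*} {d : ℕ} (G : ℝ → Matrix (Fin d) (Fin d) ℝ)
    (ε : ℤ → Ω → Fin d → ℝ) (K : ℝ → ℝ) (b : Fin d × Fin d → ℝ) (T t : ℕ) (ω : Ω) :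
    Matrix (Fin d) (Fin d) ℝ :=
  Matrix.of fun k l => ∑ i ∈ Finset.Icc 1 T,
    wti K T (b (k, l)) t i * (uproc G ε T (i : ℤ) ω k * uproc G ε T (i : ℤ) ω l)

/-- `Σ̄_t = ∑_i w_{ti} ⊙ Σ_i` (kernel smoothing of the true variances). -/
def SigBar {d : ℕ} (G : ℝ → Matrix (Fin d) (Fin d) ℝ) (K : ℝ → ℝ)
    (b : Fin d × Fin d → ℝ) (T t : ℕ) : Matrix (Fin d) (Fin d) ℝ :=
  Matrix.of fun k l => ∑ i ∈ Finset.Icc 1 T, wti K T (b (k, l)) t i * Sigt G T (i : ℤ) k l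

/-! ### Granger causality: the selection matrix and Wald statistics -/

/-- The selection matrix `R` extracting the upper-right `d₁ × d₂` blocks `A_{i,12}`. -/
def Rsel (p d d1 d2 : ℕ) : Matrix (Fin p × Fin d1 × Fin d2) ((Fin p × Fin d) × Fin d) ℝ :=
  Matrix.of fun m q =>
    if m.1 = q.1.1 ∧ (q.2 : ℕ) = (m.2.1 : ℕ) ∧ (q.1.2 : ℕ) = d1 + (m.2.2 : ℕ)
    then 1 else 0

/-- Generic Wald statistic `T θ'R'(RVR')⁻¹Rθ`. -/
def waldStat {d p d1 d2 : ℕ} (T : ℕ) (θ : (Fin p × Fin d) × Fin d → ℝ)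
    (V : Matrix ((Fin p × Fin d) × Fin d) ((Fin p × Fin d) × Fin d) ℝ) : ℝ :=
  (T : ℝ) * (Rsel p d d1 d2).mulVec θ ⬝ᵥ
    (Rsel p d d1 d2 * V * (Rsel p d d1 d2)ᵀ)⁻¹.mulVec ((Rsel p d d1 d2).mulVec θ)

/-! ### Linear processes -/

/-- The linear process `ϑ_t = ∑_{i≥0} C_i u^k_{t-i}` (non-triangular innovations). -/
def linProc {Ω : Type*} {d a k : ℕ} (C : ℕ → Matrix (Fin a) (Fin k × Fin d) ℝ)
    (u : ℤ → Ω → Fin d → ℝ) (t : ℤ) (ω : Ω) : Fin a → ℝ :=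
  fun e => ∑' i : ℕ, ∑ q : Fin k × Fin d, C i e q * u (t - (i : ℕ)) ω q.2

/-- The linear process `ϑ_t = ∑_{i≥0} C_i u^k_{t-i}` built on the triangular innovations. -/
def linProcT {Ω : Type*} {d a k : ℕ} (C : ℕ → Matrix (Fin a) (Fin k × Fin d) ℝ)
    (G : ℝ → Matrix (Fin d) (Fin d) ℝ) (ε : ℤ → Ω → Fin d → ℝ) (T : ℕ) (t : ℤ)
    (ω : Ω) : Fin a → ℝ :=
  fun e => ∑' i : ℕ, ∑ q : Fin k × Fin d, C i e q * uproc G ε T (t - (i : ℕ)) ω q.2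

/-- `∑_{i≥0} C_i (1_{k×q} ⊗ S) D_i'` computed entrywise. -/
def limCov {d a b k q : ℕ} (C : ℕ → Matrix (Fin a) (Fin k × Fin d) ℝ)
    (D : ℕ → Matrix (Fin b) (Fin q × Fin d) ℝ) (S : Matrix (Fin d) (Fin d) ℝ) :
    Matrix (Fin a) (Fin b) ℝ :=
  Matrix.of fun e f => ∑' i : ℕ,
    ∑ x : Fin k × Fin d, ∑ y : Fin q × Fin d, C i e x * S x.2 y.2 * D i f y

end

open MeasureTheory in
private lemma quad_int_aux {n : Type*} [Fintype n] (F : ℝ → Matrix n n ℝ)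
    (M : Matrix n n ℝ)
    (hF : ∀ i j, IntegrableOn (fun r => F r i j) (Set.Ioc (0:ℝ) 1))
    (hM : ∀ i j, M i j = ∫ r in Set.Ioc (0:ℝ) 1, F r i j) (x y : n → ℝ) :
    IntegrableOn (fun r => x ⬝ᵥ (F r) *ᵥ y) (Set.Ioc (0:ℝ) 1) ∧
    x ⬝ᵥ M *ᵥ y = ∫ r in Set.Ioc (0:ℝ) 1, x ⬝ᵥ (F r) *ᵥ y := by
  have hfun : (fun r => x ⬝ᵥ (F r) *ᵥ y)
      = fun r => ∑ i, ∑ j, x i * F r i j * y j := by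
    funext r
    simp [dotProduct, Matrix.mulVec, Finset.mul_sum, mul_assoc]
  have hint : ∀ i j, IntegrableOn (fun r => x i * F r i j * y j) (Set.Ioc (0:ℝ) 1) :=
    fun i j => ((hF i j).const_mul (x i)).mul_const (y j)
  have hsum : IntegrableOn (fun r => ∑ i, ∑ j, x i * F r i j * y j) (Set.Ioc (0:ℝ) 1) :=
    integrable_finset_sum _ fun i _ =>
      integrable_finset_sum _ fun j _ => hint i j
  refine ⟨hfun ▸ hsum, ?_⟩
  rw [hfun, integral_finset_sum _ fun i _ => integrable_finset_sum _ fun j _ => hint i j]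
  have hswap : ∀ i, (∫ r in Set.Ioc (0:ℝ) 1, ∑ j, x i * F r i j * y j)
      = ∑ j, x i * (∫ r in Set.Ioc (0:ℝ) 1, F r i j) * y j := by
    intro i
    rw [integral_finset_sum _ fun j _ => hint i j]
    exact Finset.sum_congr rfl fun j _ => by
      rw [MeasureTheory.integral_mul_const, MeasureTheory.integral_const_mul]
  simp only [hswap]
  simp [dotProduct, Matrix.mulVec, Finset.mul_sum, mul_assoc, hM]

private lemma dot_self_nonneg' {n : Type*} [Fintype n] (u : n → ℝ) : 0 ≤ u ⬝ᵥ u :=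
  Finset.sum_nonneg fun j _ => mul_self_nonneg (u j)

/-- With `Λ₁, Λ₂, Λ₃` the asymptotic covariance ingredients of the GLS and
OLS estimators, writing `∑ ψ̃ᵢ(1⊗Σ(r))ψ̃ᵢ' = Z(r)Z(r)'` and `B_k(r) = (Z(r) ⊗ Σ(r)^{k-3/2})'`,
one has `Λ_k = ∫ B_k'B_k`, `Λ₃ = ∫ B₂'B₁`, and `Λ₃⁻¹Λ₂Λ₃⁻¹ − Λ₁⁻¹` and `Λ₁ − Λ₃Λ₂⁻¹Λ₃` are
positive semidefinite: the GLS estimator has a smaller asymptotic variance than OLS. -/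
theorem gls_variance_smaller_than_ols
    {d p : ℕ} (hd : 0 < d) (hp : 0 < p)
    (G : ℝ → Matrix (Fin d) (Fin d) ℝ) (ψ : ℕ → Matrix (Fin d) (Fin d) ℝ)
    (hψ0 : ψ 0 = 1)
    (hψsum : ∀ k l, Summable fun i => |ψ i k l|)
    (hGmeas : ∀ k l, Measurable fun r => G r k l)
    (hGbdd : ∃ M : ℝ, ∀ r ∈ Set.Ioc (0 : ℝ) 1, ∀ k l, |G r k l| ≤ M)
    (hSig : ∀ r ∈ Set.Ioc (0 : ℝ) 1, (Sig G r).PosDef)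
    -- the integrals defining `Λ₁`, `Λ₂`, `Λ₃` are well defined
    (hint1 : ∀ q q' : (Fin p × Fin d) × Fin d, MeasureTheory.IntegrableOn
      (fun r => SSmat p ψ (Sig G r) q.1 q'.1 * (Sig G r)⁻¹ q.2 q'.2) (Set.Ioc 0 1))
    (hint2 : ∀ q q' : (Fin p × Fin d) × Fin d, MeasureTheory.IntegrableOn
      (fun r => SSmat p ψ (Sig G r) q.1 q'.1 * Sig G r q.2 q'.2) (Set.Ioc 0 1))
    (hint3 : ∀ q1 q1' : Fin p × Fin d, MeasureTheory.IntegrableOn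
      (fun r => SSmat p ψ (Sig G r) q1 q1') (Set.Ioc 0 1))
    (hpd1 : (Lambda1 p ψ G).PosDef) (hpd2 : (Lambda2 p ψ G).PosDef)
    -- a pointwise Cholesky-type factorization `∑ ψ̃ᵢ(1⊗Σ(r))ψ̃ᵢ' = Z(r)Z(r)'`
    (Z : ℝ → Matrix (Fin p × Fin d) (Fin p × Fin d) ℝ)
    (hZ : ∀ r ∈ Set.Ioc (0 : ℝ) 1, SSmat p ψ (Sig G r) = Z r * (Z r)ᵀ)
    -- `W r = Σ(r)^{1/2}`, so that `Σ(r)^{-1/2} = (W r)⁻¹`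
    (W : ℝ → Matrix (Fin d) (Fin d) ℝ)
    (hW : ∀ r ∈ Set.Ioc (0 : ℝ) 1, (W r).PosSemidef ∧ W r * W r = Sig G r) :
    -- `Λ₁ = ∫ B₁(r)'B₁(r) dr` with `B₁(r) = (Z(r) ⊗ Σ(r)^{-1/2})'`
    (∀ q q', Lambda1 p ψ G q q' = ∫ r in Set.Ioc (0 : ℝ) 1,
      ((Z r ⊗ₖ (W r)⁻¹) * (Z r ⊗ₖ (W r)⁻¹)ᵀ) q q') ∧
    -- `Λ₂ = ∫ B₂(r)'B₂(r) dr` with `B₂(r) = (Z(r) ⊗ Σ(r)^{1/2})'`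
    (∀ q q', Lambda2 p ψ G q q' = ∫ r in Set.Ioc (0 : ℝ) 1,
      ((Z r ⊗ₖ W r) * (Z r ⊗ₖ W r)ᵀ) q q') ∧
    -- `Λ₃ = ∫ B₂(r)'B₁(r) dr`
    (∀ q q', Lambda3 p ψ G q q' = ∫ r in Set.Ioc (0 : ℝ) 1,
      ((Z r ⊗ₖ W r) * (Z r ⊗ₖ (W r)⁻¹)ᵀ) q q') ∧
    ((Lambda3 p ψ G)⁻¹ * Lambda2 p ψ G * (Lambda3 p ψ G)⁻¹ -
      (Lambda1 p ψ G)⁻¹).PosSemidef ∧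
    (Lambda1 p ψ G - Lambda3 p ψ G * (Lambda2 p ψ G)⁻¹ * Lambda3 p ψ G).PosSemidef := by
  -- basic facts about `W r`
  have hdetW : ∀ r ∈ Set.Ioc (0:ℝ) 1, IsUnit (W r).det := by
    intro r hr
    have h2 := (hW r hr).2
    have hσ : (0:ℝ) < (Sig G r).det := (hSig r hr).det_pos
    have hmul : (W r).det * (W r).det = (Sig G r).det := by rw [← Matrix.det_mul, h2]
    have hne : (W r).det ≠ 0 := by
      intro h0
      rw [h0, mul_zero] at hmul
      exact hσ.ne' hmul.symm
    exact hne.isUnit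
  have hWsymm : ∀ r ∈ Set.Ioc (0:ℝ) 1, (W r)ᵀ = W r := by
    intro r hr
    have h : (W r)ᴴ = W r := (hW r hr).1.1
    rwa [Matrix.conjTranspose_eq_transpose_of_trivial] at h
  have hWinv : ∀ r ∈ Set.Ioc (0:ℝ) 1, (W r)⁻¹ * ((W r)⁻¹)ᵀ = (Sig G r)⁻¹ := by
    intro r hr
    rw [Matrix.transpose_nonsing_inv, hWsymm r hr, ← Matrix.mul_inv_rev, (hW r hr).2]
  -- pointwise matrix identities on `(0,1]`
  have hF1 : ∀ r ∈ Set.Ioc (0:ℝ) 1,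
      (Z r ⊗ₖ (W r)⁻¹) * (Z r ⊗ₖ (W r)⁻¹)ᵀ
        = SSmat p ψ (Sig G r) ⊗ₖ (Sig G r)⁻¹ := by
    intro r hr
    rw [← Matrix.kroneckerMap_transpose, ← Matrix.mul_kronecker_mul, hWinv r hr, ← hZ r hr]
  have hF2 : ∀ r ∈ Set.Ioc (0:ℝ) 1,
      (Z r ⊗ₖ W r) * (Z r ⊗ₖ W r)ᵀ = SSmat p ψ (Sig G r) ⊗ₖ Sig G r := by
    intro r hr
    rw [← Matrix.kroneckerMap_transpose, ← Matrix.mul_kronecker_mul, hWsymm r hr,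
      (hW r hr).2, ← hZ r hr]
  have hF3 : ∀ r ∈ Set.Ioc (0:ℝ) 1,
      (Z r ⊗ₖ W r) * (Z r ⊗ₖ (W r)⁻¹)ᵀ
        = SSmat p ψ (Sig G r) ⊗ₖ (1 : Matrix (Fin d) (Fin d) ℝ) := by
    intro r hr
    rw [← Matrix.kroneckerMap_transpose, ← Matrix.mul_kronecker_mul,
      Matrix.transpose_nonsing_inv, hWsymm r hr, Matrix.mul_nonsing_inv _ (hdetW r hr),
      ← hZ r hr]
  have hF3' : ∀ r ∈ Set.Ioc (0:ℝ) 1,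
      (Z r ⊗ₖ (1 : Matrix (Fin d) (Fin d) ℝ)) *
        (Z r ⊗ₖ (1 : Matrix (Fin d) (Fin d) ℝ))ᵀ
        = SSmat p ψ (Sig G r) ⊗ₖ (1 : Matrix (Fin d) (Fin d) ℝ) := by
    intro r hr
    rw [← Matrix.kroneckerMap_transpose, ← Matrix.mul_kronecker_mul, Matrix.transpose_one,
      mul_one, ← hZ r hr]
  -- the three integral representations
  have part1 : ∀ q q', Lambda1 p ψ G q q' = ∫ r in Set.Ioc (0 : ℝ) 1,
      ((Z r ⊗ₖ (W r)⁻¹) * (Z r ⊗ₖ (W r)⁻¹)ᵀ) q q' := by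
    intro q q'
    simp only [Lambda1, Matrix.of_apply]
    refine MeasureTheory.setIntegral_congr_fun measurableSet_Ioc fun r hr => ?_
    rw [hF1 r hr]
    rfl
  have part2 : ∀ q q', Lambda2 p ψ G q q' = ∫ r in Set.Ioc (0 : ℝ) 1,
      ((Z r ⊗ₖ W r) * (Z r ⊗ₖ W r)ᵀ) q q' := by
    intro q q'
    simp only [Lambda2, Matrix.of_apply]
    refine MeasureTheory.setIntegral_congr_fun measurableSet_Ioc fun r hr => ?_
    rw [hF2 r hr]
    rfl
  have part3 : ∀ q q', Lambda3 p ψ G q q' = ∫ r in Set.Ioc (0 : ℝ) 1,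
      ((Z r ⊗ₖ W r) * (Z r ⊗ₖ (W r)⁻¹)ᵀ) q q' := by
    intro q q'
    simp only [Lambda3, Matrix.of_apply]
    rw [← MeasureTheory.integral_mul_const]
    refine MeasureTheory.setIntegral_congr_fun measurableSet_Ioc fun r hr => ?_
    rw [hF3 r hr]
    simp [Matrix.kroneckerMap_apply, Matrix.one_apply]
  have hm3' : ∀ q q', Lambda3 p ψ G q q' = ∫ r in Set.Ioc (0 : ℝ) 1,
      ((Z r ⊗ₖ (1 : Matrix (Fin d) (Fin d) ℝ)) *
        (Z r ⊗ₖ (1 : Matrix (Fin d) (Fin d) ℝ))ᵀ) q q' := by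
    intro q q'
    simp only [Lambda3, Matrix.of_apply]
    rw [← MeasureTheory.integral_mul_const]
    refine MeasureTheory.setIntegral_congr_fun measurableSet_Ioc fun r hr => ?_
    rw [hF3' r hr]
    simp [Matrix.kroneckerMap_apply, Matrix.one_apply]
  -- integrability of the new integrands
  have hi1 : ∀ q q', MeasureTheory.IntegrableOn
      (fun r => ((Z r ⊗ₖ (W r)⁻¹) * (Z r ⊗ₖ (W r)⁻¹)ᵀ) q q') (Set.Ioc (0:ℝ) 1) :=
    fun q q' => MeasureTheory.IntegrableOn.congr_fun (hint1 q q')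
      (fun r hr => by rw [hF1 r hr]; rfl) measurableSet_Ioc
  have hi2 : ∀ q q', MeasureTheory.IntegrableOn
      (fun r => ((Z r ⊗ₖ W r) * (Z r ⊗ₖ W r)ᵀ) q q') (Set.Ioc (0:ℝ) 1) :=
    fun q q' => MeasureTheory.IntegrableOn.congr_fun (hint2 q q')
      (fun r hr => by rw [hF2 r hr]; rfl) measurableSet_Ioc
  have hi3 : ∀ q q', MeasureTheory.IntegrableOn
      (fun r => ((Z r ⊗ₖ W r) * (Z r ⊗ₖ (W r)⁻¹)ᵀ) q q') (Set.Ioc (0:ℝ) 1) :=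
    fun q q' => MeasureTheory.IntegrableOn.congr_fun
      ((hint3 q.1 q'.1).mul_const (if q.2 = q'.2 then (1:ℝ) else 0))
      (fun r hr => by rw [hF3 r hr]; simp [Matrix.kroneckerMap_apply, Matrix.one_apply])
      measurableSet_Ioc
  have hi3' : ∀ q q', MeasureTheory.IntegrableOn
      (fun r => ((Z r ⊗ₖ (1 : Matrix (Fin d) (Fin d) ℝ)) *
        (Z r ⊗ₖ (1 : Matrix (Fin d) (Fin d) ℝ))ᵀ) q q') (Set.Ioc (0:ℝ) 1) :=
    fun q q' => MeasureTheory.IntegrableOn.congr_fun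
      ((hint3 q.1 q'.1).mul_const (if q.2 = q'.2 then (1:ℝ) else 0))
      (fun r hr => by rw [hF3' r hr]; simp [Matrix.kroneckerMap_apply, Matrix.one_apply])
      measurableSet_Ioc
  -- the key inequality from the pointwise Cauchy–Schwarz argument
  have expand : ∀ (u v : ((Fin p × Fin d) × Fin d) → ℝ),
      u ⬝ᵥ u - 2 * (v ⬝ᵥ u) + v ⬝ᵥ v = ∑ j, (u j - v j)^2 := by
    intro u v
    simp only [dotProduct, Finset.mul_sum, ← Finset.sum_sub_distrib,
      ← Finset.sum_add_distrib]
    exact Finset.sum_congr rfl fun j _ => by ring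
  have key : ∀ x y : ((Fin p × Fin d) × Fin d) → ℝ,
      0 ≤ x ⬝ᵥ (Lambda1 p ψ G) *ᵥ x - 2 * (y ⬝ᵥ (Lambda3 p ψ G) *ᵥ x)
          + y ⬝ᵥ (Lambda2 p ψ G) *ᵥ y := by
    intro x y
    obtain ⟨I1, E1⟩ := quad_int_aux _ _ hi1 part1 x x
    obtain ⟨I3, E3⟩ := quad_int_aux _ _ hi3 part3 y x
    obtain ⟨I2, E2⟩ := quad_int_aux _ _ hi2 part2 y y
    have hcomb : (∫ r in Set.Ioc (0:ℝ) 1,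
        (x ⬝ᵥ ((Z r ⊗ₖ (W r)⁻¹) * (Z r ⊗ₖ (W r)⁻¹)ᵀ) *ᵥ x
          - 2 * (y ⬝ᵥ ((Z r ⊗ₖ W r) * (Z r ⊗ₖ (W r)⁻¹)ᵀ) *ᵥ x)
          + y ⬝ᵥ ((Z r ⊗ₖ W r) * (Z r ⊗ₖ W r)ᵀ) *ᵥ y))
        = (∫ r in Set.Ioc (0:ℝ) 1, x ⬝ᵥ ((Z r ⊗ₖ (W r)⁻¹) * (Z r ⊗ₖ (W r)⁻¹)ᵀ) *ᵥ x)
          - 2 * (∫ r in Set.Ioc (0:ℝ) 1, y ⬝ᵥ ((Z r ⊗ₖ W r) * (Z r ⊗ₖ (W r)⁻¹)ᵀ) *ᵥ x)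
          + ∫ r in Set.Ioc (0:ℝ) 1, y ⬝ᵥ ((Z r ⊗ₖ W r) * (Z r ⊗ₖ W r)ᵀ) *ᵥ y := by
      have Isub : MeasureTheory.IntegrableOn (fun r =>
          x ⬝ᵥ ((Z r ⊗ₖ (W r)⁻¹) * (Z r ⊗ₖ (W r)⁻¹)ᵀ) *ᵥ x
            - 2 * (y ⬝ᵥ ((Z r ⊗ₖ W r) * (Z r ⊗ₖ (W r)⁻¹)ᵀ) *ᵥ x)) (Set.Ioc (0:ℝ) 1) :=
        I1.sub (I3.const_mul 2)
      rw [MeasureTheory.integral_add Isub I2,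
        MeasureTheory.integral_sub I1 (I3.const_mul 2),
        MeasureTheory.integral_const_mul]
    rw [E1, E2, E3, ← hcomb]
    refine MeasureTheory.setIntegral_nonneg measurableSet_Ioc fun r hr => ?_
    have e1 : x ⬝ᵥ ((Z r ⊗ₖ (W r)⁻¹) * (Z r ⊗ₖ (W r)⁻¹)ᵀ) *ᵥ x
        = ((Z r ⊗ₖ (W r)⁻¹)ᵀ *ᵥ x) ⬝ᵥ ((Z r ⊗ₖ (W r)⁻¹)ᵀ *ᵥ x) := by
      rw [← Matrix.mulVec_mulVec, Matrix.dotProduct_mulVec, ← Matrix.mulVec_transpose]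
    have e3 : y ⬝ᵥ ((Z r ⊗ₖ W r) * (Z r ⊗ₖ (W r)⁻¹)ᵀ) *ᵥ x
        = ((Z r ⊗ₖ W r)ᵀ *ᵥ y) ⬝ᵥ ((Z r ⊗ₖ (W r)⁻¹)ᵀ *ᵥ x) := by
      rw [← Matrix.mulVec_mulVec, Matrix.dotProduct_mulVec, ← Matrix.mulVec_transpose]
    have e2 : y ⬝ᵥ ((Z r ⊗ₖ W r) * (Z r ⊗ₖ W r)ᵀ) *ᵥ y
        = ((Z r ⊗ₖ W r)ᵀ *ᵥ y) ⬝ᵥ ((Z r ⊗ₖ W r)ᵀ *ᵥ y) := by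
      rw [← Matrix.mulVec_mulVec, Matrix.dotProduct_mulVec, ← Matrix.mulVec_transpose]
    rw [e1, e2, e3, expand]
    exact Finset.sum_nonneg fun j _ => sq_nonneg _
  -- symmetry of `Λ₃`
  have hsym3 : (Lambda3 p ψ G)ᵀ = Lambda3 p ψ G := by
    ext q q'
    simp only [Matrix.transpose_apply, Lambda3, Matrix.of_apply]
    have hSS : (∫ r in Set.Ioc (0:ℝ) 1, SSmat p ψ (Sig G r) q'.1 q.1)
        = ∫ r in Set.Ioc (0:ℝ) 1, SSmat p ψ (Sig G r) q.1 q'.1 := by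
      refine MeasureTheory.setIntegral_congr_fun measurableSet_Ioc fun r hr => ?_
      rw [hZ r hr]
      have ht : (Z r * (Z r)ᵀ)ᵀ = Z r * (Z r)ᵀ := by
        rw [Matrix.transpose_mul, Matrix.transpose_transpose]
      calc (Z r * (Z r)ᵀ) q'.1 q.1 = ((Z r * (Z r)ᵀ)ᵀ) q.1 q'.1 := rfl
        _ = (Z r * (Z r)ᵀ) q.1 q'.1 := by rw [ht]
    rw [hSS]
    by_cases h : q.2 = q'.2
    · simp [h]
    · simp [h, Ne.symm h]
  have herm3 : (Lambda3 p ψ G).IsHermitian :=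
    (Matrix.conjTranspose_eq_transpose_of_trivial _).trans hsym3
  -- `Λ₃` is positive definite
  have hdet2 : IsUnit (Lambda2 p ψ G).det := hpd2.det_pos.ne'.isUnit
  have hdet1 : IsUnit (Lambda1 p ψ G).det := hpd1.det_pos.ne'.isUnit
  have pd3 : (Lambda3 p ψ G).PosDef := by
    refine Matrix.PosDef.of_dotProduct_mulVec_pos herm3 fun x hx => ?_
    have hsx : star x = x := funext fun i => star_trivial (x i)
    rw [hsx]
    obtain ⟨I3', E3'⟩ := quad_int_aux _ _ hi3' hm3' x x
    have hpt : ∀ r, x ⬝ᵥ ((Z r ⊗ₖ (1 : Matrix (Fin d) (Fin d) ℝ)) *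
        (Z r ⊗ₖ (1 : Matrix (Fin d) (Fin d) ℝ))ᵀ) *ᵥ x
        = ((Z r ⊗ₖ (1 : Matrix (Fin d) (Fin d) ℝ))ᵀ *ᵥ x) ⬝ᵥ
          ((Z r ⊗ₖ (1 : Matrix (Fin d) (Fin d) ℝ))ᵀ *ᵥ x) := by
      intro r
      rw [← Matrix.mulVec_mulVec, Matrix.dotProduct_mulVec, ← Matrix.mulVec_transpose]
    have hnn : 0 ≤ x ⬝ᵥ (Lambda3 p ψ G) *ᵥ x := by
      rw [E3']
      refine MeasureTheory.setIntegral_nonneg measurableSet_Ioc fun r _ => ?_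
      rw [hpt r]
      exact dot_self_nonneg' _
    rcases hnn.lt_or_eq with hlt | heq
    · exact hlt
    · exfalso
      have hzero : (∫ r in Set.Ioc (0:ℝ) 1, x ⬝ᵥ
          ((Z r ⊗ₖ (1 : Matrix (Fin d) (Fin d) ℝ)) *
            (Z r ⊗ₖ (1 : Matrix (Fin d) (Fin d) ℝ))ᵀ) *ᵥ x) = 0 := by
        rw [← E3', ← heq]
      have hae0 : (fun r => x ⬝ᵥ ((Z r ⊗ₖ (1 : Matrix (Fin d) (Fin d) ℝ)) *
          (Z r ⊗ₖ (1 : Matrix (Fin d) (Fin d) ℝ))ᵀ) *ᵥ x)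
          =ᵐ[MeasureTheory.volume.restrict (Set.Ioc (0:ℝ) 1)] 0 := by
        refine (MeasureTheory.integral_eq_zero_iff_of_nonneg_ae ?_ I3').1 hzero
        refine Filter.Eventually.of_forall fun r => ?_
        show (0:ℝ) ≤ x ⬝ᵥ ((Z r ⊗ₖ (1 : Matrix (Fin d) (Fin d) ℝ)) *
          (Z r ⊗ₖ (1 : Matrix (Fin d) (Fin d) ℝ))ᵀ) *ᵥ x
        rw [hpt r]
        exact dot_self_nonneg' _
      have hh0 : (fun r => x ⬝ᵥ ((Z r ⊗ₖ W r) * (Z r ⊗ₖ W r)ᵀ) *ᵥ x)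
          =ᵐ[MeasureTheory.volume.restrict (Set.Ioc (0:ℝ) 1)] 0 := by
        refine ((MeasureTheory.ae_restrict_mem measurableSet_Ioc).and hae0).mono ?_
        rintro r ⟨hr, hgr⟩
        have hw : (Z r ⊗ₖ (1 : Matrix (Fin d) (Fin d) ℝ))ᵀ *ᵥ x = 0 := by
          have h0 : ((Z r ⊗ₖ (1 : Matrix (Fin d) (Fin d) ℝ))ᵀ *ᵥ x) ⬝ᵥ
              ((Z r ⊗ₖ (1 : Matrix (Fin d) (Fin d) ℝ))ᵀ *ᵥ x) = 0 := by
            rw [← hpt r]; exact hgr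
          funext j
          have := (Finset.sum_eq_zero_iff_of_nonneg
            (fun j _ => mul_self_nonneg (((Z r ⊗ₖ (1 : Matrix (Fin d) (Fin d) ℝ))ᵀ *ᵥ x) j))).1
            h0 j (Finset.mem_univ j)
          exact mul_self_eq_zero.1 this
        have hid : (Z r ⊗ₖ W r)ᵀ
            = ((1 : Matrix (Fin p × Fin d) (Fin p × Fin d) ℝ) ⊗ₖ W r) *
              (Z r ⊗ₖ (1 : Matrix (Fin d) (Fin d) ℝ))ᵀ := by
          rw [← Matrix.kroneckerMap_transpose, ← Matrix.kroneckerMap_transpose,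
            Matrix.transpose_one, ← Matrix.mul_kronecker_mul, one_mul, mul_one, hWsymm r hr]
        have hv : (Z r ⊗ₖ W r)ᵀ *ᵥ x = 0 := by
          rw [hid, ← Matrix.mulVec_mulVec, hw, Matrix.mulVec_zero]
        have e2 : x ⬝ᵥ ((Z r ⊗ₖ W r) * (Z r ⊗ₖ W r)ᵀ) *ᵥ x
            = ((Z r ⊗ₖ W r)ᵀ *ᵥ x) ⬝ᵥ ((Z r ⊗ₖ W r)ᵀ *ᵥ x) := by
          rw [← Matrix.mulVec_mulVec, Matrix.dotProduct_mulVec, ← Matrix.mulVec_transpose]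
        show x ⬝ᵥ ((Z r ⊗ₖ W r) * (Z r ⊗ₖ W r)ᵀ) *ᵥ x = 0
        rw [e2, hv]
        simp
      obtain ⟨I2', E2'⟩ := quad_int_aux _ _ hi2 part2 x x
      have h2zero : x ⬝ᵥ (Lambda2 p ψ G) *ᵥ x = 0 := by
        rw [E2', MeasureTheory.integral_eq_zero_of_ae hh0]
      have hpos := hpd2.dotProduct_mulVec_pos hx
      rw [hsx, h2zero] at hpos
      exact lt_irrefl 0 hpos
  have hdet3 : IsUnit (Lambda3 p ψ G).det := pd3.det_pos.ne'.isUnit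
  -- `Λ₁ - Λ₃Λ₂⁻¹Λ₃` is positive semidefinite
  have psdB : (Lambda1 p ψ G -
      Lambda3 p ψ G * (Lambda2 p ψ G)⁻¹ * Lambda3 p ψ G).PosSemidef := by
    refine Matrix.PosSemidef.of_dotProduct_mulVec_nonneg ?_ ?_
    · show _ᴴ = _
      rw [Matrix.conjTranspose_sub, Matrix.conjTranspose_mul, Matrix.conjTranspose_mul,
        hpd1.1.eq, herm3.eq, hpd2.1.inv.eq, ← mul_assoc]
    · intro x
      have hsx : star x = x := funext fun i => star_trivial (x i)
      rw [hsx, Matrix.sub_mulVec, dotProduct_sub]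
      set y := (Lambda2 p ψ G)⁻¹ *ᵥ (Lambda3 p ψ G *ᵥ x) with hy
      have hy2 : Lambda2 p ψ G *ᵥ y = Lambda3 p ψ G *ᵥ x := by
        rw [hy, Matrix.mulVec_mulVec, Matrix.mul_nonsing_inv _ hdet2, Matrix.one_mulVec]
      have hterm : x ⬝ᵥ (Lambda3 p ψ G * (Lambda2 p ψ G)⁻¹ * Lambda3 p ψ G) *ᵥ x
          = y ⬝ᵥ Lambda3 p ψ G *ᵥ x := by
        rw [mul_assoc, ← Matrix.mulVec_mulVec, ← Matrix.mulVec_mulVec, ← hy,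
          Matrix.dotProduct_mulVec, ← Matrix.mulVec_transpose, hsym3]
        exact dotProduct_comm _ y
      have hy2' : y ⬝ᵥ Lambda2 p ψ G *ᵥ y = y ⬝ᵥ Lambda3 p ψ G *ᵥ x := by rw [hy2]
      have hk := key x y
      rw [hterm]
      linarith
  -- `Λ₂ - Λ₃Λ₁⁻¹Λ₃` is positive semidefinite
  have psdQ : (Lambda2 p ψ G -
      Lambda3 p ψ G * (Lambda1 p ψ G)⁻¹ * Lambda3 p ψ G).PosSemidef := by
    refine Matrix.PosSemidef.of_dotProduct_mulVec_nonneg ?_ ?_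
    · show _ᴴ = _
      rw [Matrix.conjTranspose_sub, Matrix.conjTranspose_mul, Matrix.conjTranspose_mul,
        hpd2.1.eq, herm3.eq, hpd1.1.inv.eq, ← mul_assoc]
    · intro y
      have hsy : star y = y := funext fun i => star_trivial (y i)
      rw [hsy, Matrix.sub_mulVec, dotProduct_sub]
      set x := (Lambda1 p ψ G)⁻¹ *ᵥ (Lambda3 p ψ G *ᵥ y) with hx
      have hx1 : Lambda1 p ψ G *ᵥ x = Lambda3 p ψ G *ᵥ y := by
        rw [hx, Matrix.mulVec_mulVec, Matrix.mul_nonsing_inv _ hdet1, Matrix.one_mulVec]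
      have ht1 : x ⬝ᵥ Lambda1 p ψ G *ᵥ x = x ⬝ᵥ Lambda3 p ψ G *ᵥ y := by rw [hx1]
      have ht2 : y ⬝ᵥ Lambda3 p ψ G *ᵥ x = x ⬝ᵥ Lambda3 p ψ G *ᵥ y := by
        rw [Matrix.dotProduct_mulVec, ← Matrix.mulVec_transpose, hsym3]
        exact dotProduct_comm _ x
      have hterm : y ⬝ᵥ (Lambda3 p ψ G * (Lambda1 p ψ G)⁻¹ * Lambda3 p ψ G) *ᵥ y
          = x ⬝ᵥ Lambda3 p ψ G *ᵥ y := by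
        rw [mul_assoc, ← Matrix.mulVec_mulVec, ← Matrix.mulVec_mulVec, ← hx]
        exact ht2
      have hk := key x y
      rw [hterm]
      linarith
  -- conjugating by `Λ₃⁻¹`
  have psdA : ((Lambda3 p ψ G)⁻¹ * Lambda2 p ψ G * (Lambda3 p ψ G)⁻¹ -
      (Lambda1 p ψ G)⁻¹).PosSemidef := by
    have hconj := psdQ.mul_mul_conjTranspose_same (Lambda3 p ψ G)⁻¹
    rw [herm3.inv.eq] at hconj
    have h1 : (Lambda3 p ψ G)⁻¹ *
        (Lambda3 p ψ G * (Lambda1 p ψ G)⁻¹ * Lambda3 p ψ G) * (Lambda3 p ψ G)⁻¹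
        = (Lambda1 p ψ G)⁻¹ := by
      calc (Lambda3 p ψ G)⁻¹ *
          (Lambda3 p ψ G * (Lambda1 p ψ G)⁻¹ * Lambda3 p ψ G) * (Lambda3 p ψ G)⁻¹
          = ((Lambda3 p ψ G)⁻¹ * Lambda3 p ψ G) * (Lambda1 p ψ G)⁻¹ *
            (Lambda3 p ψ G * (Lambda3 p ψ G)⁻¹) := by
            simp only [mul_assoc]
        _ = (Lambda1 p ψ G)⁻¹ := by
            rw [Matrix.nonsing_inv_mul _ hdet3, Matrix.mul_nonsing_inv _ hdet3,
              one_mul, mul_one]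
    have hEq : (Lambda3 p ψ G)⁻¹ *
        (Lambda2 p ψ G - Lambda3 p ψ G * (Lambda1 p ψ G)⁻¹ * Lambda3 p ψ G) *
        (Lambda3 p ψ G)⁻¹
        = (Lambda3 p ψ G)⁻¹ * Lambda2 p ψ G * (Lambda3 p ψ G)⁻¹ -
          (Lambda1 p ψ G)⁻¹ := by
      rw [mul_sub, sub_mul, h1]
    rw [← hEq]
    exact hconj
  exact ⟨part1, part2, part3, psdA, psdB⟩
end

section
/- Suppose Σ(r) is a positive definite d×d matrix for each r ∈ (0,1] with bounded measurable entries, and ψ̃_i = blockdiag(ψ_i, ψ_{i−1}, …, ψ_{i−p+1}) where the d×d matrices ψ_i have absolutely summable components, ψ_0 = I_d and ψ_j = 0 for j < 0. Then for every r the pd×pd matrix Σ_{i=0}^∞ ψ̃_i (1_{p×p} ⊗ Σ(r)) ψ̃_i' is positive definite, and consequently the matrices Λ1 = ∫₀¹ Σ_{i=0}^∞ {ψ̃_i (1_{p×p} ⊗ Σ(r)) ψ̃_i'} ⊗ Σ(r)^{−1} dr, Λ2 = ∫₀¹ Σ_{i=0}^∞ {ψ̃_i (1_{p×p} ⊗ Σ(r))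 ψ̃_i'} ⊗ Σ(r) dr and Λ3 = ∫₀¹ Σ_{i=0}^∞ {ψ̃_i (1_{p×p} ⊗ Σ(r)) ψ̃_i'} dr ⊗ I_d are positive definite. -/
open MeasureTheory ProbabilityTheory Filter Matrix Kronecker Topology

section AuxPosdef

lemma kron_posDef {n m : Type*} [Fintype n] [Fintype m] [DecidableEq n] [DecidableEq m]
    {A : Matrix n n ℝ} {B : Matrix m m ℝ} (hA : A.PosDef) (hB : B.PosDef) :
    (A ⊗ₖ B).PosDef := by
  obtain ⟨S, hS1, hS2⟩ : ∃ S : Matrix n n ℝ, S.IsHermitian ∧ S * S = A :=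
    by open MatrixOrder in exact ⟨CFC.sqrt A, (nonneg_iff_posSemidef.1 (CFC.sqrt_nonneg A)).1,
      CFC.sqrt_mul_sqrt_self A (nonneg_iff_posSemidef.2 hA.posSemidef)⟩
  obtain ⟨T, hT1, hT2⟩ : ∃ T : Matrix m m ℝ, T.IsHermitian ∧ T * T = B :=
    by open MatrixOrder in exact ⟨CFC.sqrt B, (nonneg_iff_posSemidef.1 (CFC.sqrt_nonneg B)).1,
      CFC.sqrt_mul_sqrt_self B (nonneg_iff_posSemidef.2 hB.posSemidef)⟩
  have hAt : Aᵀ = A := by have h := hA.1; simp at h; exact h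
  have hBt : Bᵀ = B := by have h := hB.1; simp at h; exact h
  have hSt : Sᵀ = S := by have h := hS1; simp at h; exact h
  have hTt : Tᵀ = T := by have h := hT1; simp at h; exact h
  have hSdet : IsUnit S.det := by
    have : IsUnit (S.det * S.det) := by
      rw [← det_mul, hS2]; exact isUnit_iff_ne_zero.2 hA.det_pos.ne'
    exact isUnit_mul_self_iff.mp this
  have hTdet : IsUnit T.det := by
    have : IsUnit (T.det * T.det) := by
      rw [← det_mul, hT2]; exact isUnit_iff_ne_zero.2 hB.det_pos.ne'
    exact isUnit_mul_self_iff.mp this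
  have hAB : (S ⊗ₖ T) * (S ⊗ₖ T) = A ⊗ₖ B := by
    rw [← mul_kronecker_mul, hS2, hT2]
  have hSTt : (S ⊗ₖ T)ᵀ = S ⊗ₖ T := by
    rw [← kroneckerMap_transpose, hSt, hTt]
  refine posDef_iff_dotProduct_mulVec.2 ⟨?_, ?_⟩
  · show (A ⊗ₖ B)ᴴ = _
    rw [conjTranspose, ← kroneckerMap_transpose, hAt, hBt]
    simp [Matrix.map]
    rfl
  · intro x hx
    have hNx : (S ⊗ₖ T) *ᵥ x ≠ 0 := by
      intro h0
      have hinv : (S⁻¹ ⊗ₖ T⁻¹) * (S ⊗ₖ T) = 1 := by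
        rw [← mul_kronecker_mul, nonsing_inv_mul _ hSdet, nonsing_inv_mul _ hTdet,
          one_kronecker_one]
      have hx0 : x = 0 := by
        have h := congrArg (fun M => M *ᵥ x) hinv
        simpa [← Matrix.mulVec_mulVec, h0] using h.symm
      exact hx hx0
    have key : star x ⬝ᵥ ((A ⊗ₖ B) *ᵥ x) = ((S ⊗ₖ T) *ᵥ x) ⬝ᵥ ((S ⊗ₖ T) *ᵥ x) := by
      rw [star_trivial, ← hAB]
      nth_rewrite 1 [← hSTt]
      rw [← Matrix.mulVec_mulVec, Matrix.dotProduct_mulVec, Matrix.vecMul_transpose]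
    rw [key]
    simpa [star_trivial] using (dotProduct_star_self_pos_iff (v := (S ⊗ₖ T) *ᵥ x)).2 hNx

lemma integral_posDef {n : Type*} [Fintype n] [DecidableEq n]
    (F : ℝ → Matrix n n ℝ)
    (hpos : ∀ r ∈ Set.Ioc (0:ℝ) 1, (F r).PosDef)
    (hint : ∀ q q', IntegrableOn (fun r => F r q q') (Set.Ioc (0:ℝ) 1)) :
    (Matrix.of fun q q' => ∫ r in Set.Ioc (0:ℝ) 1, F r q q' : Matrix n n ℝ).PosDef := by
  refine posDef_iff_dotProduct_mulVec.2 ⟨?_, ?_⟩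
  · ext q q'
    simp only [conjTranspose_apply, of_apply, star_trivial]
    refine setIntegral_congr_fun measurableSet_Ioc fun r hr => ?_
    have h := (hpos r hr).1
    have := congrFun (congrFun h q') q
    simpa [conjTranspose_apply] using this.symm
  · intro x hx
    have key : star x ⬝ᵥ ((Matrix.of fun q q' => ∫ r in Set.Ioc (0:ℝ) 1, F r q q') *ᵥ x)
        = ∫ r in Set.Ioc (0:ℝ) 1, x ⬝ᵥ (F r) *ᵥ x := by
      simp only [star_trivial, dotProduct, mulVec, dotProduct, of_apply, Finset.mul_sum]
      rw [integral_finset_sum _ (fun q _ => integrable_finset_sum _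
        fun q' _ => (((hint q q').mul_const (x q')).const_mul (x q)))]
      refine Finset.sum_congr rfl fun q _ => ?_
      rw [integral_finset_sum _ (fun q' _ => (((hint q q').mul_const (x q')).const_mul (x q)))]
      refine Finset.sum_congr rfl fun q' _ => ?_
      rw [integral_const_mul, integral_mul_const]
    rw [key]
    have hgint : IntegrableOn (fun r => x ⬝ᵥ (F r) *ᵥ x) (Set.Ioc (0:ℝ) 1) := by
      have : (fun r => x ⬝ᵥ (F r) *ᵥ x)
          = fun r => ∑ q, ∑ q', x q * (F r q q' * x q') := by
        funext r; simp [dotProduct, mulVec, Finset.mul_sum]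
      rw [this]
      exact integrable_finset_sum _ fun q _ => integrable_finset_sum _
        fun q' _ => (((hint q q').mul_const (x q')).const_mul (x q))
    have hnn : 0 ≤ᵐ[volume.restrict (Set.Ioc (0:ℝ) 1)] fun r => x ⬝ᵥ (F r) *ᵥ x := by
      refine (ae_restrict_iff' measurableSet_Ioc).2 (ae_of_all _ fun r hr => ?_)
      simpa [star_trivial] using (hpos r hr).posSemidef.dotProduct_mulVec_nonneg x
    rw [setIntegral_pos_iff_support_of_nonneg_ae hnn hgint]
    have hsub : Set.Ioc (0:ℝ) 1 ⊆ Function.support (fun r => x ⬝ᵥ (F r) *ᵥ x) ∩ Set.Ioc 0 1 :=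
      fun r hr => ⟨by simpa [star_trivial] using ((hpos r hr).dotProduct_mulVec_pos hx).ne', hr⟩
    calc (0:ENNReal) < volume (Set.Ioc (0:ℝ) 1) := by simp
      _ ≤ _ := measure_mono hsub

lemma psiT_mul_apply {d p : ℕ} (ψ : ℕ → Matrix (Fin d) (Fin d) ℝ)
    (S : Matrix (Fin d) (Fin d) ℝ) (i : ℕ) (q q' : Fin p × Fin d) :
    (psiT p ψ i * ((Matrix.of fun _ _ => (1:ℝ) : Matrix (Fin p) (Fin p) ℝ) ⊗ₖ S) *
      (psiT p ψ i)ᵀ) q q'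
    = if (q.1:ℕ) ≤ i ∧ (q'.1:ℕ) ≤ i then
        ∑ k, ∑ l, ψ (i - (q.1:ℕ)) q.2 k * S k l * ψ (i - (q'.1:ℕ)) q'.2 l else 0 := by
  classical
  simp only [Matrix.mul_apply, Matrix.transpose_apply, psiT, Matrix.of_apply,
    kroneckerMap_apply, Fintype.sum_prod_type, ite_mul, mul_ite, zero_mul, mul_zero,
    ite_and, Finset.sum_ite_irrel, Finset.sum_const_zero, Finset.sum_ite_eq,
    Finset.sum_ite_eq', Finset.mem_univ, if_true]
  split_ifs with h1 h2 <;> try rfl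
  simp only [Finset.sum_mul, one_mul]
  exact Finset.sum_comm

lemma entry_expand {d p : ℕ} (ψ : ℕ → Matrix (Fin d) (Fin d) ℝ)
    (S : Matrix (Fin d) (Fin d) ℝ) (i : ℕ) (q q' : Fin p × Fin d) :
    (psiT p ψ i * ((Matrix.of fun _ _ => (1:ℝ) : Matrix (Fin p) (Fin p) ℝ) ⊗ₖ S) *
      (psiT p ψ i)ᵀ) q q'
    = ∑ k, ∑ l, (if (q.1:ℕ) ≤ i ∧ (q'.1:ℕ) ≤ i then
        ψ (i - (q.1:ℕ)) q.2 k * S k l * ψ (i - (q'.1:ℕ)) q'.2 l else 0) := by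
  rw [psiT_mul_apply]
  split_ifs with h <;> simp

lemma summable_entry {d p : ℕ} (ψ : ℕ → Matrix (Fin d) (Fin d) ℝ)
    (hψsum : ∀ k l, Summable fun i => |ψ i k l|) (S : Matrix (Fin d) (Fin d) ℝ)
    (q q' : Fin p × Fin d) :
    Summable fun i => (psiT p ψ i *
      ((Matrix.of fun _ _ => (1:ℝ) : Matrix (Fin p) (Fin p) ℝ) ⊗ₖ S) *
      (psiT p ψ i)ᵀ) q q' := by
  simp only [entry_expand ψ S _ q q']
  refine summable_sum fun k _ => summable_sum fun l _ => ?_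
  set C := ∑' j, |ψ j q.2 k| with hCdef
  have hC0 : 0 ≤ C := tsum_nonneg fun _ => abs_nonneg _
  have hC : ∀ j, |ψ j q.2 k| ≤ C := fun j => (hψsum q.2 k).le_tsum j fun _ _ => abs_nonneg _
  have hg : Summable (fun i : ℕ => if (q'.1:ℕ) ≤ i then |ψ (i - (q'.1:ℕ)) q'.2 l| else 0) := by
    refine (summable_nat_add_iff (q'.1 : ℕ)).1 ?_
    have : (fun n : ℕ => if (q'.1:ℕ) ≤ n + (q'.1:ℕ) then |ψ (n + (q'.1:ℕ) - (q'.1:ℕ)) q'.2 l|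
        else 0) = fun n => |ψ n q'.2 l| := by
      funext n; rw [if_pos (Nat.le_add_left _ _), Nat.add_sub_cancel]
    rw [this]; exact hψsum q'.2 l
  refine Summable.of_abs ?_
  refine Summable.of_nonneg_of_le (fun i => abs_nonneg _) (fun i => ?_)
    (hg.mul_left (C * |S k l|))
  split_ifs with h h2 h3
  · rw [abs_mul, abs_mul]
    exact mul_le_mul_of_nonneg_right
      (mul_le_mul_of_nonneg_right (hC _) (abs_nonneg _)) (abs_nonneg _)
  · exact absurd h.2 h2
  · rw [abs_zero]
    exact mul_nonneg (mul_nonneg hC0 (abs_nonneg _)) (abs_nonneg _)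
  · simp

lemma sum3_comm {α β γ : Type*} [Fintype α] [Fintype β] [Fintype γ] (f : α → β → γ → ℝ) :
    ∑ a, ∑ b, ∑ c, f a b c = ∑ c, ∑ b, ∑ a, f a b c := by
  calc ∑ a, ∑ b, ∑ c, f a b c = ∑ b, ∑ a, ∑ c, f a b c := Finset.sum_comm
    _ = ∑ b, ∑ c, ∑ a, f a b c := Finset.sum_congr rfl fun b _ => Finset.sum_comm
    _ = ∑ c, ∑ b, ∑ a, f a b c := Finset.sum_comm

def wvec {d p : ℕ} (ψ : ℕ → Matrix (Fin d) (Fin d) ℝ) (x : Fin p × Fin d → ℝ) (i : ℕ) :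
    Fin d → ℝ :=
  fun k => ∑ a : Fin p, if (a:ℕ) ≤ i then ∑ m, ψ (i - (a:ℕ)) m k * x (a, m) else 0

lemma quad_eq {d p : ℕ} (ψ : ℕ → Matrix (Fin d) (Fin d) ℝ) (S : Matrix (Fin d) (Fin d) ℝ)
    (x : Fin p × Fin d → ℝ) (i : ℕ) :
    x ⬝ᵥ (psiT p ψ i * ((Matrix.of fun _ _ => (1:ℝ) : Matrix (Fin p) (Fin p) ℝ) ⊗ₖ S) *
      (psiT p ψ i)ᵀ) *ᵥ x = wvec ψ x i ⬝ᵥ S *ᵥ wvec ψ x i := by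
  classical
  have h1 : x ⬝ᵥ (psiT p ψ i * ((Matrix.of fun _ _ => (1:ℝ) : Matrix (Fin p) (Fin p) ℝ) ⊗ₖ S) *
      (psiT p ψ i)ᵀ) *ᵥ x
      = ((psiT p ψ i)ᵀ *ᵥ x) ⬝ᵥ
        (((Matrix.of fun _ _ => (1:ℝ) : Matrix (Fin p) (Fin p) ℝ) ⊗ₖ S) *ᵥ
          ((psiT p ψ i)ᵀ *ᵥ x)) := by
    rw [← Matrix.mulVec_mulVec, ← Matrix.mulVec_mulVec, Matrix.dotProduct_mulVec,
      ← Matrix.mulVec_transpose]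
  have h2 : (psiT p ψ i)ᵀ *ᵥ x = fun q : Fin p × Fin d =>
      if (q.1:ℕ) ≤ i then ∑ m, ψ (i - (q.1:ℕ)) m q.2 * x (q.1, m) else 0 := by
    funext q
    simp only [Matrix.mulVec, dotProduct, Matrix.transpose_apply, psiT, Matrix.of_apply,
      Fintype.sum_prod_type, ite_and, ite_mul, zero_mul, Finset.sum_ite_irrel,
      Finset.sum_const_zero, Finset.sum_ite_eq, Finset.sum_ite_eq', Finset.mem_univ, if_true]
  have h3 : ∀ v : Fin p × Fin d → ℝ,
      v ⬝ᵥ (((Matrix.of fun _ _ => (1:ℝ) : Matrix (Fin p) (Fin p) ℝ) ⊗ₖ S) *ᵥ v)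
      = (fun k => ∑ a : Fin p, v (a, k)) ⬝ᵥ S *ᵥ (fun k => ∑ a : Fin p, v (a, k)) := by
    intro v
    simp only [dotProduct, Matrix.mulVec, kroneckerMap_apply, Matrix.of_apply,
      Fintype.sum_prod_type, one_mul, Finset.sum_mul, Finset.mul_sum]
    conv_lhs => rw [Finset.sum_comm]
    exact Finset.sum_congr rfl fun k _ => sum3_comm _
  rw [h1, h3, h2]
  rfl

lemma SSmat_posDef {d p : ℕ} (ψ : ℕ → Matrix (Fin d) (Fin d) ℝ) (hψ0 : ψ 0 = 1)
    (hψsum : ∀ k l, Summable fun i => |ψ i k l|) {S : Matrix (Fin d) (Fin d) ℝ}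
    (hS : S.PosDef) : (SSmat p ψ S).PosDef := by
  classical
  have hSt : ∀ k l, S k l = S l k := by
    intro k l
    have := congrFun (congrFun hS.1 k) l
    simpa [Matrix.conjTranspose_apply] using this.symm
  refine posDef_iff_dotProduct_mulVec.2 ⟨?_, ?_⟩
  · ext q q'
    simp only [Matrix.conjTranspose_apply, star_trivial, SSmat, Matrix.of_apply]
    refine tsum_congr fun i => ?_
    rw [psiT_mul_apply, psiT_mul_apply]
    by_cases h1 : (q.1:ℕ) ≤ i <;> by_cases h2 : (q'.1:ℕ) ≤ i <;>
      simp only [h1, h2, and_true, true_and, if_true, if_false, and_false, false_and] <;>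
      try rfl
    rw [Finset.sum_comm]
    exact Finset.sum_congr rfl fun k _ => Finset.sum_congr rfl fun l _ => by
      rw [hSt l k]; ring
  · intro x hx
    -- summability of each w-quadratic term
    have hsumM : ∀ q q' : Fin p × Fin d, Summable fun i =>
        x q * (psiT p ψ i * ((Matrix.of fun _ _ => (1:ℝ) : Matrix (Fin p) (Fin p) ℝ) ⊗ₖ S) *
          (psiT p ψ i)ᵀ) q q' * x q' :=
      fun q q' => ((summable_entry ψ hψsum S q q').mul_left (x q)).mul_right (x q')
    have hsumW : Summable fun i => wvec ψ x i ⬝ᵥ S *ᵥ wvec ψ x i := by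
      have : (fun i => wvec ψ x i ⬝ᵥ S *ᵥ wvec ψ x i)
          = fun i => ∑ q : Fin p × Fin d, ∑ q' : Fin p × Fin d,
            x q * (psiT p ψ i * ((Matrix.of fun _ _ => (1:ℝ) : Matrix (Fin p) (Fin p) ℝ) ⊗ₖ S) *
              (psiT p ψ i)ᵀ) q q' * x q' := by
        funext i
        rw [← quad_eq]
        simp [dotProduct, Matrix.mulVec, Finset.mul_sum, mul_assoc]
      rw [this]
      exact summable_sum fun q _ => summable_sum fun q' _ => hsumM q q'
    have key : x ⬝ᵥ (SSmat p ψ S) *ᵥ x = ∑' i, wvec ψ x i ⬝ᵥ S *ᵥ wvec ψ x i := by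
      calc x ⬝ᵥ (SSmat p ψ S) *ᵥ x
          = ∑ q : Fin p × Fin d, ∑ q' : Fin p × Fin d, ∑' i,
            x q * (psiT p ψ i * ((Matrix.of fun _ _ => (1:ℝ) : Matrix (Fin p) (Fin p) ℝ) ⊗ₖ S) *
              (psiT p ψ i)ᵀ) q q' * x q' := by
            simp only [dotProduct, Matrix.mulVec, SSmat, Matrix.of_apply,
              Finset.mul_sum]
            refine Finset.sum_congr rfl fun q _ => Finset.sum_congr rfl fun q' _ => ?_
            rw [← tsum_mul_right, ← tsum_mul_left]
            exact tsum_congr fun i => (mul_assoc _ _ _).symm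
        _ = ∑' i, ∑ q : Fin p × Fin d, ∑ q' : Fin p × Fin d,
            x q * (psiT p ψ i * ((Matrix.of fun _ _ => (1:ℝ) : Matrix (Fin p) (Fin p) ℝ) ⊗ₖ S) *
              (psiT p ψ i)ᵀ) q q' * x q' := by
            rw [eq_comm, Summable.tsum_finsetSum fun q _ => summable_sum fun q' _ => hsumM q q']
            exact Finset.sum_congr rfl fun q _ =>
              (Summable.tsum_finsetSum fun q' _ => hsumM q q')
        _ = ∑' i, wvec ψ x i ⬝ᵥ S *ᵥ wvec ψ x i := by
            refine tsum_congr fun i => ?_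
            rw [← quad_eq]
            simp [dotProduct, Matrix.mulVec, Finset.mul_sum, mul_assoc]
    -- find the minimal nonzero block
    have hxex : ∃ a : Fin p, ∃ k, x (a, k) ≠ 0 := by
      obtain ⟨⟨a, k⟩, hq⟩ := Function.ne_iff.mp hx
      exact ⟨a, k, hq⟩
    let A : Finset (Fin p) := Finset.univ.filter fun a => ∃ k, x (a, k) ≠ 0
    have hA : A.Nonempty := by
      obtain ⟨a, k, h⟩ := hxex
      exact ⟨a, Finset.mem_filter.2 ⟨Finset.mem_univ _, ⟨k, h⟩⟩⟩
    set a₀ := A.min' hA with ha₀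
    have hmin : ∀ a : Fin p, a < a₀ → ∀ m, x (a, m) = 0 := by
      intro a halt m
      by_contra h
      exact absurd (A.min'_le a (Finset.mem_filter.2 ⟨Finset.mem_univ _, ⟨m, h⟩⟩))
        (not_le.2 halt)
    have hw : wvec ψ x (a₀ : ℕ) = fun k => x (a₀, k) := by
      funext k
      rw [wvec]
      rw [Finset.sum_eq_single a₀]
      · rw [if_pos le_rfl, Nat.sub_self, hψ0]
        simp [Matrix.one_apply]
      · intro a _ hne
        by_cases hle : (a:ℕ) ≤ (a₀:ℕ)
        · rw [if_pos hle]
          have : a < a₀ := lt_of_le_of_ne (by exact_mod_cast hle) hne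
          simp [hmin a this]
        · rw [if_neg hle]
      · intro h; exact absurd (Finset.mem_univ a₀) h
    have hwne : wvec ψ x (a₀ : ℕ) ≠ 0 := by
      obtain ⟨k, hk⟩ : ∃ k, x (a₀, k) ≠ 0 := by
        have := A.min'_mem hA
        rw [Finset.mem_filter] at this
        exact this.2
      rw [hw]
      intro h0
      exact hk (congrFun h0 k)
    have hterm : 0 < wvec ψ x (a₀ : ℕ) ⬝ᵥ S *ᵥ wvec ψ x (a₀ : ℕ) := by
      simpa [star_trivial] using hS.dotProduct_mulVec_pos hwne
    have hnn : ∀ i, 0 ≤ wvec ψ x i ⬝ᵥ S *ᵥ wvec ψ x i := fun i => by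
      simpa [star_trivial] using hS.posSemidef.dotProduct_mulVec_nonneg (wvec ψ x i)
    rw [show star x = x from star_trivial x, key]
    exact lt_of_lt_of_le hterm (hsumW.le_tsum _ fun j _ => hnn j)

end AuxPosdef

/-- If `Σ(r)` is positive definite on `(0,1]` with bounded measurable entries
and the `ψᵢ` are absolutely summable with `ψ₀ = I_d`, then `∑ ψ̃ᵢ(1_{p×p}⊗Σ(r))ψ̃ᵢ'` is
positive definite for every `r`, and consequently `Λ₁`, `Λ₂` and `Λ₃` are positive definite. -/
theorem lambda_matrices_posdef
    {d p : ℕ} (hd : 0 < d) (hp : 0 < p)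
    (G : ℝ → Matrix (Fin d) (Fin d) ℝ) (ψ : ℕ → Matrix (Fin d) (Fin d) ℝ)
    (hψ0 : ψ 0 = 1)
    (hψsum : ∀ k l, Summable fun i => |ψ i k l|)
    (hGmeas : ∀ k l, Measurable fun r => G r k l)
    (hGbdd : ∃ M : ℝ, ∀ r ∈ Set.Ioc (0 : ℝ) 1, ∀ k l, |G r k l| ≤ M)
    (hSig : ∀ r ∈ Set.Ioc (0 : ℝ) 1, (Sig G r).PosDef)
    -- the integrals defining `Λ₁`, `Λ₂`, `Λ₃` are well defined
    (hint1 : ∀ q q' : (Fin p × Fin d) × Fin d, MeasureTheory.IntegrableOn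
      (fun r => SSmat p ψ (Sig G r) q.1 q'.1 * (Sig G r)⁻¹ q.2 q'.2) (Set.Ioc 0 1))
    (hint2 : ∀ q q' : (Fin p × Fin d) × Fin d, MeasureTheory.IntegrableOn
      (fun r => SSmat p ψ (Sig G r) q.1 q'.1 * Sig G r q.2 q'.2) (Set.Ioc 0 1))
    (hint3 : ∀ q1 q1' : Fin p × Fin d, MeasureTheory.IntegrableOn
      (fun r => SSmat p ψ (Sig G r) q1 q1') (Set.Ioc 0 1)) :
    (∀ r ∈ Set.Ioc (0 : ℝ) 1, (SSmat p ψ (Sig G r)).PosDef) ∧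
    (Lambda1 p ψ G).PosDef ∧ (Lambda2 p ψ G).PosDef ∧ (Lambda3 p ψ G).PosDef := by
  
  have hSS : ∀ r ∈ Set.Ioc (0:ℝ) 1, (SSmat p ψ (Sig G r)).PosDef :=
    fun r hr => SSmat_posDef ψ hψ0 hψsum (hSig r hr)
  refine ⟨hSS, ?_, ?_, ?_⟩
  · exact integral_posDef (fun r => SSmat p ψ (Sig G r) ⊗ₖ (Sig G r)⁻¹)
      (fun r hr => kron_posDef (hSS r hr) ((hSig r hr).inv))
      (fun q q' => hint1 q q')
  · exact integral_posDef (fun r => SSmat p ψ (Sig G r) ⊗ₖ Sig G r)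
      (fun r hr => kron_posDef (hSS r hr) (hSig r hr))
      (fun q q' => hint2 q q')
  · have h3 : Lambda3 p ψ G = Matrix.of fun q q' =>
        ∫ r in Set.Ioc (0:ℝ) 1,
          (SSmat p ψ (Sig G r) ⊗ₖ (1 : Matrix (Fin d) (Fin d) ℝ)) q q' := by
      ext q q'
      simp only [Lambda3, Matrix.of_apply, kroneckerMap_apply, Matrix.one_apply]
      rw [MeasureTheory.integral_mul_const]
    rw [h3]
    exact integral_posDef _
      (fun r hr => kron_posDef (hSS r hr) Matrix.PosDef.one)
      (fun q q' => (hint3 q.1 q'.1).mul_const _)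
end
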